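/- Over any field F, VP_1^weakest(F) = VNP_1^weakest(F) and VP_1^weak(F) = VNP_1^weak(F); moreover, if the characteristic of F is different from 2, then VP_1^gen(F) ⊊ VNP_1^gen(F). -/

import Mathlib

open MvPolynomial

noncomputable section

/-- A function `ℕ → ℕ` is polynomially bounded. -/
def PolyBounded (f : ℕ → ℕ) : Prop := ∃ c : ℕ, ∀ n, f n ≤ (n + 2) ^ c

/-- A sequence of multivariate polynomials is a family: `f n` uses only variables `x_i`
with `i < v n`, for a polynomially bounded `v`. -/
def IsPolyFamily {F : Type} [CommSemiring F] (f : ℕ → MvPolynomial ℕ F) : Prop :=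
  ∃ v : ℕ → ℕ, PolyBounded v ∧ ∀ n, ∀ i ∈ (f n).vars, i < v n

/-- Arithmetic formulas over `F` in variables `x_i`, `i : ℕ`: expressions built from
variables and constants by binary additions and multiplications. -/
inductive Formula (F : Type) where
  | var : ℕ → Formula F
  | const : F → Formula F
  | add : Formula F → Formula F → Formula F
  | mul : Formula F → Formula F → Formula F

namespace Formula

variable {F : Type} [CommSemiring F]

/-- The polynomial computed by an arithmetic formula. -/
def eval : Formula F → MvPolynomial ℕ F
  | var i => X i
  | const c => C c
  | add φ ψ => φ.eval + ψ.eval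
  | mul φ ψ => φ.eval * ψ.eval

/-- The size of a formula: the number of (binary) operations. -/
def size : Formula F → ℕ
  | var _ => 0
  | const _ => 0
  | add φ ψ => φ.size + ψ.size + 1
  | mul φ ψ => φ.size + ψ.size + 1

/-- The depth of a formula: the length of the longest root-to-leaf path. -/
def depth : Formula F → ℕ
  | var _ => 0
  | const _ => 0
  | add φ ψ => max φ.depth ψ.depth + 1
  | mul φ ψ => max φ.depth ψ.depth + 1

end Formula

/-- A general affine linear form `∑ αᵢ xᵢ + β`, i.e. a polynomial of total degree ≤ 1. -/
def IsGenForm {F : Type} [CommSemiring F] (p : MvPolynomial ℕ F) : Prop := p.totalDegree ≤ 1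

/-- A single variable or a constant. -/
def IsWeakestForm {F : Type} [CommSemiring F] (p : MvPolynomial ℕ F) : Prop :=
  (∃ i, p = X i) ∨ ∃ c, p = C c

/-- A simple affine linear form `α·xᵢ + β`. -/
def IsWeakForm {F : Type} [CommSemiring F] (p : MvPolynomial ℕ F) : Prop :=
  ∃ (α β : F) (i : ℕ), p = C α * X i + C β

/-- An affine linear form in at most two variables, `α·xᵢ + β·xⱼ + γ`. -/
def IsWeakPlusForm {F : Type} [CommSemiring F] (p : MvPolynomial ℕ F) : Prop :=
  ∃ (α β γ : F) (i j : ℕ), p = C α * X i + C β * X j + C γ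

/-- `ABPComputes form k s p`: some width-`k` algebraic branching program of size `s`, all of
whose matrix entries satisfy the predicate `form`, computes the polynomial `p`; that is,
`p = vᵀ · M_s ⋯ M_1 · w` for vectors `v, w ∈ F^k` and matrices `M_i` with entries of
type `form`. -/
def ABPComputes {F : Type} [CommSemiring F] (form : MvPolynomial ℕ F → Prop)
    (k s : ℕ) (p : MvPolynomial ℕ F) : Prop :=
  ∃ (v w : Fin k → F) (M : Fin s → Matrix (Fin k) (Fin k) (MvPolynomial ℕ F)),
    (∀ (i : Fin s) (a b : Fin k), form (M i a b)) ∧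
    p = dotProduct (fun a => C (v a))
          (Matrix.mulVec (List.ofFn M).prod fun a => C (w a))

/-- The class `VP_k^*`: families computable by width-`k` ABPs, with entries of label
type `form`, of polynomially bounded size. -/
def VPkClass (F : Type) [CommSemiring F] (k : ℕ)
    (form : MvPolynomial ℕ F → Prop) : Set (ℕ → MvPolynomial ℕ F) :=
  { f | IsPolyFamily f ∧
        ∃ s : ℕ → ℕ, PolyBounded s ∧ ∀ n, ∃ s' ≤ s n, ABPComputes form k s' (f n) }

/-- The class `VPe`: families computable by arithmetic formulas of polynomially
bounded size. -/
def VPe (F : Type) [CommSemiring F] : Set (ℕ → MvPolynomial ℕ F) :=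
  { f | IsPolyFamily f ∧
        ∃ s : ℕ → ℕ, PolyBounded s ∧ ∀ n, ∃ φ : Formula F, φ.size ≤ s n ∧ φ.eval = f n }

/-- The inclusion `F[x] → F(ε)[x]`. -/
def liftε (F : Type) [Field F] : MvPolynomial ℕ F →+* MvPolynomial ℕ (RatFunc F) :=
  MvPolynomial.map (algebraMap F (RatFunc F))

/-- The inclusion `F[ε][x] → F(ε)[x]`. -/
def liftPolyε (F : Type) [Field F] :
    MvPolynomial ℕ (Polynomial F) →+* MvPolynomial ℕ (RatFunc F) :=
  MvPolynomial.map (algebraMap (Polynomial F) (RatFunc F))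

/-- The approximation closure of a class `Cl` given over `F(ε)`: families `(f_n)` over `F`
for which there are error polynomials `f_{n;1}, …, f_{n;e(n)}` over `F` such that the family
`g_n = f_n + ε f_{n;1} + ⋯ + ε^{e(n)} f_{n;e(n)}` belongs to `Cl` over `F(ε)`. -/
def ApproxClosure (F : Type) [Field F]
    (Cl : Set (ℕ → MvPolynomial ℕ (RatFunc F))) : Set (ℕ → MvPolynomial ℕ F) :=
  { f | IsPolyFamily f ∧ ∃ (e : ℕ → ℕ) (ferr : ℕ → ℕ → MvPolynomial ℕ F),
      (fun n => liftε F (f n) + ∑ i ∈ Finset.range (e n),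
          C ((RatFunc.X : RatFunc F) ^ (i + 1)) * liftε F (ferr n i)) ∈ Cl }

/-- The poly-approximation closure: as `ApproxClosure`, with the error degree `e(n)`
additionally required to be polynomially bounded. -/
def PolyApproxClosure (F : Type) [Field F]
    (Cl : Set (ℕ → MvPolynomial ℕ (RatFunc F))) : Set (ℕ → MvPolynomial ℕ F) :=
  { f | IsPolyFamily f ∧ ∃ e : ℕ → ℕ, PolyBounded e ∧
      ∃ ferr : ℕ → ℕ → MvPolynomial ℕ F,
      (fun n => liftε F (f n) + ∑ i ∈ Finset.range (e n),
          C ((RatFunc.X : RatFunc F) ^ (i + 1)) * liftε F (ferr n i)) ∈ Cl }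

/-- The hypercube sum `∑_{b ∈ {0,1}^p} g(b, x)`: the first `p` variables of `g` are summed
over all Boolean assignments, and variable `p + i` of `g` is renamed to `x_i`. -/
def hcSum {F : Type} [CommSemiring F] (p : ℕ) (g : MvPolynomial ℕ F) : MvPolynomial ℕ F :=
  ∑ b : Fin p → Bool,
    MvPolynomial.aeval
      (fun i : ℕ => if h : i < p then (if b ⟨i, h⟩ then 1 else 0) else X (i - p)) g

/-- The nondeterminism closure `N(Cl)`: families `(f_n)` with
`f_n(x) = ∑_{b ∈ {0,1}^{p(n)}} g_{q(n)}(b,x)` for some `(g_n) ∈ Cl` and polynomially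
bounded `p`, `q`. -/
def Nclosure {F : Type} [CommSemiring F] (Cl : Set (ℕ → MvPolynomial ℕ F)) :
    Set (ℕ → MvPolynomial ℕ F) :=
  { f | IsPolyFamily f ∧ ∃ g ∈ Cl, ∃ p q : ℕ → ℕ, PolyBounded p ∧ PolyBounded q ∧
        ∀ n, f n = hcSum (p n) (g (q n)) }

/-- The matrix `Q(f) = [[f, 1], [1, 0]]`. -/
def Qmat {R : Type} [CommSemiring R] (f : MvPolynomial ℕ R) :
    Matrix (Fin 2) (Fin 2) (MvPolynomial ℕ R) := !![f, 1; 1, 0]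

/-- A primitive Q-matrix: `Q(ℓ)` for a parametrized affine linear form `ℓ`, i.e. an affine
linear form in the `x`-variables with coefficients in `F(ε)`. -/
def IsPrimitiveQ (F : Type) [Field F]
    (M : Matrix (Fin 2) (Fin 2) (MvPolynomial ℕ (RatFunc F))) : Prop :=
  ∃ ℓ : MvPolynomial ℕ (RatFunc F), ℓ.totalDegree ≤ 1 ∧ M = Qmat ℓ

/-- `M` can be written as a product of `n` primitive Q-matrices. -/
def IsProdPrimQ (F : Type) [Field F] (n : ℕ)
    (M : Matrix (Fin 2) (Fin 2) (MvPolynomial ℕ (RatFunc F))) : Prop :=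
  ∃ L : Fin n → Matrix (Fin 2) (Fin 2) (MvPolynomial ℕ (RatFunc F)),
    (∀ i, IsPrimitiveQ F (L i)) ∧ M = (List.ofFn L).prod

/-- `M ∈ Q(f) + O(ε^k)`: `M = Q(f) + ε^k · E` for some matrix `E` with entries
in `F[ε][x]`. -/
def InQErr (F : Type) [Field F] (f : MvPolynomial ℕ F) (k : ℕ)
    (M : Matrix (Fin 2) (Fin 2) (MvPolynomial ℕ (RatFunc F))) : Prop :=
  ∃ E : Matrix (Fin 2) (Fin 2) (MvPolynomial ℕ (Polynomial F)),
    M = Qmat (liftε F f) +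
      (C ((RatFunc.X : RatFunc F) ^ k) : MvPolynomial ℕ (RatFunc F)) • E.map (liftPolyε F)

/-- `M` has entries in `F[ε][x]` and error degree at most `e`: every entry has degree at
most `e` in `ε`. -/
def ErrDegLE (F : Type) [Field F]
    (M : Matrix (Fin 2) (Fin 2) (MvPolynomial ℕ (RatFunc F))) (e : ℕ) : Prop :=
  ∃ E : Matrix (Fin 2) (Fin 2) (MvPolynomial ℕ (Polynomial F)),
    M = E.map (liftPolyε F) ∧
    ∀ (a b : Fin 2) (m : ℕ →₀ ℕ), (MvPolynomial.coeff m (E a b)).natDegree ≤ e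

/-- The generalized Fibonacci polynomials: `F_0 = 1`, `F_1 = x_1`,
`F_n = x_n · F_{n-1} + F_{n-2}` (variables indexed from 0). -/
def fibPoly (R : Type) [CommSemiring R] : ℕ → MvPolynomial ℕ R
  | 0 => 1
  | 1 => X 0
  | n + 2 => X (n + 1) * fibPoly R (n + 1) + fibPoly R n

/-- `f` is a degeneration of the Fibonacci polynomial `F_m` witnessing border Fibonacci
complexity at most `m`: there are parametrized affine linear forms `ℓ_1, …, ℓ_m` with
`F_m(ℓ_1, …, ℓ_m) = f + ε·g` for some `g ∈ F[ε][x]`. -/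
def FibBorderProj (F : Type) [Field F] (f : MvPolynomial ℕ F) (m : ℕ) : Prop :=
  ∃ ℓ : ℕ → MvPolynomial ℕ (RatFunc F),
    (∀ i, (ℓ i).totalDegree ≤ 1) ∧
    ∃ g : MvPolynomial ℕ (Polynomial F),
      MvPolynomial.aeval ℓ (fibPoly (RatFunc F) m) =
        liftε F f + C (RatFunc.X : RatFunc F) * liftPolyε F g


section Helpers

lemma polyBounded_const (k : ℕ) : PolyBounded (fun _ => k) := by
  refine ⟨k, fun n => ?_⟩
  calc k ≤ 2 ^ k := Nat.le_of_lt Nat.lt_two_pow_self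
    _ ≤ (n + 2) ^ k := Nat.pow_le_pow_left (by omega) k

lemma polyBounded_id : PolyBounded (fun n => n) := ⟨1, fun n => by simp only [pow_one]; omega⟩

lemma PolyBounded.comp {f g : ℕ → ℕ} (hf : PolyBounded f) (hg : PolyBounded g) :
    PolyBounded (fun n => f (g n)) := by
  obtain ⟨c, hc⟩ := hf
  obtain ⟨d, hd⟩ := hg
  refine ⟨c * (d + 3), fun n => ?_⟩
  calc f (g n) ≤ (g n + 2) ^ c := hc _
    _ ≤ ((n + 2) ^ (d + 3)) ^ c := by
        apply Nat.pow_le_pow_left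
        have h1 : g n ≤ (n + 2) ^ d := hd n
        have h2 : (1:ℕ) ≤ (n+2) ^ d := Nat.one_le_pow _ _ (by omega)
        have h4 : (8:ℕ) ≤ (n + 2) ^ 3 := by
          calc (8:ℕ) = 2 ^ 3 := by norm_num
            _ ≤ (n + 2) ^ 3 := Nat.pow_le_pow_left (by omega) 3
        calc g n + 2 ≤ (n + 2) ^ d + 2 := by omega
          _ ≤ (n + 2) ^ d * 8 := by nlinarith
          _ ≤ (n + 2) ^ d * (n + 2) ^ 3 := Nat.mul_le_mul_left _ h4
          _ = (n + 2) ^ (d + 3) := by ring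
    _ = (n + 2) ^ (c * (d + 3)) := by rw [← pow_mul, mul_comm c]

/-- The substitution used in `hcSum`. -/
def hcVal {F : Type} [CommSemiring F] (p : ℕ) (b : Fin p → Bool) : ℕ → MvPolynomial ℕ F :=
  fun i : ℕ => if h : i < p then (if b ⟨i, h⟩ then 1 else 0) else X (i - p)

lemma hcSum_eq {F : Type} [CommSemiring F] (p : ℕ) (g : MvPolynomial ℕ F) :
    hcSum p g = ∑ b : Fin p → Bool, MvPolynomial.aeval (hcVal p b) g := rfl

lemma hcSum_zero {F : Type} [CommSemiring F] (g : MvPolynomial ℕ F) : hcSum 0 g = g := by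
  have h : ∀ b : Fin 0 → Bool, MvPolynomial.aeval (hcVal 0 b) g = g := by
    intro b
    have hb : (hcVal 0 b : ℕ → MvPolynomial ℕ F) = X := by
      funext i
      simp [hcVal]
    rw [hb, aeval_X_left_apply]
  rw [hcSum_eq, Fintype.sum_unique]
  exact h _

lemma entry_one_list_prod {R : Type*} [CommSemiring R]
    (L : List (Matrix (Fin 1) (Fin 1) R)) :
    L.prod 0 0 = (L.map (fun A => A 0 0)).prod := by
  induction L with
  | nil => simp [Matrix.one_apply_eq]
  | cons A L ih => simp [Matrix.mul_apply, Fin.sum_univ_one, ih]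

lemma abp_one_iff {F : Type} [CommSemiring F] (form : MvPolynomial ℕ F → Prop)
    (s : ℕ) (f : MvPolynomial ℕ F) :
    ABPComputes form 1 s f ↔
      ∃ (c : F) (L : List (MvPolynomial ℕ F)), L.length = s ∧ (∀ ℓ ∈ L, form ℓ) ∧
        f = C c * L.prod := by
  constructor
  · rintro ⟨v, w, M, hM, hf⟩
    refine ⟨v 0 * w 0, List.ofFn (fun i => M i 0 0), by simp, ?_, ?_⟩
    · intro ℓ hℓ
      rw [List.mem_ofFn] at hℓ
      obtain ⟨i, rfl⟩ := hℓ
      exact hM i 0 0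
    · rw [hf]
      have : ((List.ofFn M).prod) 0 0 = (List.ofFn (fun i => M i 0 0)).prod := by
        rw [entry_one_list_prod, List.map_ofFn]
        rfl
      simp [dotProduct, Matrix.mulVec, Fin.sum_univ_one, this]
      ring
  · rintro ⟨c, L, rfl, hL, rfl⟩
    refine ⟨fun _ => c, fun _ => 1, fun i => Matrix.of (fun _ _ => L.get i), fun i a b => hL _ (L.get_mem _), ?_⟩
    have key : ((List.ofFn (fun i : Fin L.length => Matrix.of (fun _ _ : Fin 1 => L[(i : ℕ)]))).prod) 0 0 = L.prod := by
      rw [entry_one_list_prod, List.map_ofFn]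
      exact congrArg List.prod List.ofFn_getElem
    simp [dotProduct, Matrix.mulVec, Fin.sum_univ_one, key]

end Helpers

section Closure

variable {F : Type} [CommSemiring F]

/-- `form` behaves well under the hypercube substitution: every `form`-factor either
becomes a constant (depending on the Boolean point) or a fixed `form`-factor. -/
def GoodForm (form : MvPolynomial ℕ F → Prop) : Prop :=
  ∀ (p : ℕ) (ℓ : MvPolynomial ℕ F), form ℓ →
    (∃ γ : (Fin p → Bool) → F, ∀ b, MvPolynomial.aeval (hcVal p b) ℓ = C (γ b)) ∨
    (∃ ℓ', form ℓ' ∧ ∀ b, MvPolynomial.aeval (hcVal p b) ℓ = ℓ')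

lemma split_list {form : MvPolynomial ℕ F → Prop} (hform : GoodForm form) (p : ℕ) :
    ∀ L : List (MvPolynomial ℕ F), (∀ ℓ ∈ L, form ℓ) →
      ∃ (γ : (Fin p → Bool) → F) (L' : List (MvPolynomial ℕ F)),
        L'.length ≤ L.length ∧ (∀ ℓ' ∈ L', form ℓ') ∧
        ∀ b, (L.map (MvPolynomial.aeval (hcVal p b))).prod = C (γ b) * L'.prod := by
  intro L
  induction L with
  | nil => exact fun _ => ⟨fun _ => 1, [], le_refl _, by simp, by simp⟩
  | cons ℓ L ih =>
    intro hL
    obtain ⟨γ, L', hlen, hL', hprod⟩ := ih (fun m hm => hL m (List.mem_cons_of_mem _ hm))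
    rcases hform p ℓ (hL ℓ List.mem_cons_self) with ⟨δ, hδ⟩ | ⟨ℓ', hℓ', hval⟩
    · refine ⟨fun b => δ b * γ b, L', le_trans hlen (Nat.le_succ _), hL', fun b => ?_⟩
      simp only [List.map_cons, List.prod_cons, hδ b, hprod b, map_mul]
      ring
    · refine ⟨γ, ℓ' :: L', by simpa using hlen, ?_, fun b => ?_⟩
      · intro m hm
        rcases List.mem_cons.mp hm with rfl | hm
        · exact hℓ'
        · exact hL' m hm
      · simp only [List.map_cons, List.prod_cons, hval b, hprod b]
        ring

lemma hcSum_prod {form : MvPolynomial ℕ F → Prop} (hform : GoodForm form) (p : ℕ)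
    (c : F) (L : List (MvPolynomial ℕ F)) (hL : ∀ ℓ ∈ L, form ℓ) :
    ∃ (d : F) (L' : List (MvPolynomial ℕ F)),
      L'.length ≤ L.length ∧ (∀ ℓ' ∈ L', form ℓ') ∧
      hcSum p (C c * L.prod) = C d * L'.prod := by
  obtain ⟨γ, L', hlen, hL', hprod⟩ := split_list hform p L hL
  refine ⟨c * ∑ b : Fin p → Bool, γ b, L', hlen, hL', ?_⟩
  rw [hcSum_eq]
  have : ∀ b : Fin p → Bool, MvPolynomial.aeval (hcVal p b) (C c * L.prod) =
      C (c * γ b) * L'.prod := by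
    intro b
    rw [map_mul, aeval_C, map_list_prod, hprod b, MvPolynomial.algebraMap_eq]
    rw [map_mul]
    ring
  rw [Finset.sum_congr rfl (fun b _ => this b)]
  rw [← Finset.sum_mul, ← map_sum, ← Finset.mul_sum, map_mul]

lemma N_sub_VP {form : MvPolynomial ℕ F → Prop} (hform : GoodForm form) :
    Nclosure (VPkClass F 1 form) ⊆ VPkClass F 1 form := by
  rintro f ⟨hfam, g, ⟨hgfam, s, hs, hcomp⟩, p, q, hp, hq, heq⟩
  refine ⟨hfam, fun n => s (q n), hs.comp hq, fun n => ?_⟩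
  obtain ⟨s', hs', habp⟩ := hcomp (q n)
  obtain ⟨c, L, hLlen, hLform, hLeq⟩ := (abp_one_iff form s' _).mp habp
  obtain ⟨d, L', hlen, hL', hsum⟩ := hcSum_prod hform (p n) c L hLform
  refine ⟨L'.length, le_trans (le_trans hlen (le_of_eq hLlen)) hs', ?_⟩
  rw [abp_one_iff]
  exact ⟨d, L', rfl, hL', by rw [heq n, hLeq, hsum]⟩

lemma VP_sub_N (k : ℕ) (form : MvPolynomial ℕ F → Prop) :
    VPkClass F k form ⊆ Nclosure (VPkClass F k form) := by
  intro f hf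
  exact ⟨hf.1, f, hf, fun _ => 0, fun n => n, polyBounded_const 0, polyBounded_id,
    fun n => (hcSum_zero _).symm⟩

lemma goodForm_weakest : GoodForm (IsWeakestForm (F := F)) := by
  intro p ℓ hℓ
  rcases hℓ with ⟨i, rfl⟩ | ⟨c, rfl⟩
  · by_cases h : i < p
    · left
      refine ⟨fun b => if b ⟨i, h⟩ then 1 else 0, fun b => ?_⟩
      rw [aeval_X]
      simp only [hcVal, dif_pos h]
      split <;> simp
    · right
      refine ⟨X (i - p), Or.inl ⟨i - p, rfl⟩, fun b => ?_⟩
      rw [aeval_X]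
      simp only [hcVal, dif_neg h]
  · left
    exact ⟨fun _ => c, fun b => by rw [aeval_C, MvPolynomial.algebraMap_eq]⟩

lemma goodForm_weak : GoodForm (IsWeakForm (F := F)) := by
  rintro p ℓ ⟨α, β, i, rfl⟩
  by_cases h : i < p
  · left
    refine ⟨fun b => α * (if b ⟨i, h⟩ then 1 else 0) + β, fun b => ?_⟩
    simp only [map_add, map_mul, aeval_C, aeval_X, MvPolynomial.algebraMap_eq,
      hcVal, dif_pos h, C_add, C_mul]
    congr 1
    split <;> simp
  · right
    refine ⟨C α * X (i - p) + C β, ⟨α, β, i - p, rfl⟩, fun b => ?_⟩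
    simp only [map_add, map_mul, aeval_C, aeval_X, MvPolynomial.algebraMap_eq,
      hcVal, dif_neg h]

end Closure

section Hardness

variable {F : Type} [Field F]

lemma finsupp_deg_le_one (m : ℕ →₀ ℕ) (hm : (m.sum fun _ e => e) ≤ 1) :
    m = 0 ∨ ∃ i, m = Finsupp.single i 1 := by
  by_cases h0 : m = 0
  · exact Or.inl h0
  · right
    obtain ⟨i, hi⟩ := Finsupp.support_nonempty_iff.mpr h0
    have hsum : (m.sum fun _ e => e) = ∑ j ∈ m.support, m j := rfl
    have hle : m i ≤ ∑ j ∈ m.support, m j :=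
      Finset.single_le_sum (fun j _ => Nat.zero_le _) hi
    have hmi : m i = 1 := by
      have h1 : 1 ≤ m i := Nat.one_le_iff_ne_zero.mpr (Finsupp.mem_support_iff.mp hi)
      omega
    refine ⟨i, ?_⟩
    have hsupp : m.support = {i} := by
      by_contra hne
      obtain ⟨j, hj, hji⟩ : ∃ j ∈ m.support, j ≠ i := by
        by_contra hc
        push_neg at hc
        exact hne (Finset.eq_singleton_iff_unique_mem.mpr ⟨hi, hc⟩)
      have hj1 : 1 ≤ m j := Nat.one_le_iff_ne_zero.mpr (Finsupp.mem_support_iff.mp hj)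
      have : m i + m j ≤ ∑ k ∈ m.support, m k := by
        classical
        have := Finset.add_sum_erase m.support m hi
        have hj' : j ∈ m.support.erase i := Finset.mem_erase.mpr ⟨hji, hj⟩
        have h2 : m j ≤ ∑ k ∈ m.support.erase i, m k :=
          Finset.single_le_sum (fun k _ => Nat.zero_le _) hj'
        omega
      omega
    have := (Finsupp.support_eq_singleton.mp hsupp).2
    rw [hmi] at this
    exact this

lemma support_affine {p : MvPolynomial ℕ F} (hp : p.totalDegree ≤ 1) :
    ∀ m ∈ p.support, m = 0 ∨ ∃ i, m = Finsupp.single i 1 := by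
  intro m hm
  exact finsupp_deg_le_one m (le_trans (MvPolynomial.le_totalDegree hm) hp)

lemma affine_const_of_coeffs {p : MvPolynomial ℕ F} (hp : p.totalDegree ≤ 1)
    (h : ∀ i, MvPolynomial.coeff (Finsupp.single i 1) p = 0) :
    p = C (MvPolynomial.coeff 0 p) := by
  apply MvPolynomial.ext
  intro m
  classical
  rw [MvPolynomial.coeff_C]
  by_cases hm : 0 = m
  · rw [if_pos hm, hm]
  · rw [if_neg hm]
    by_contra hc
    have hmem : m ∈ p.support := MvPolynomial.mem_support_iff.mpr hc
    rcases support_affine hp m hmem with rfl | ⟨i, rfl⟩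
    · exact hm rfl
    · exact hc (h i)

lemma eval_affine_sparse {p : MvPolynomial ℕ F} (hp : p.totalDegree ≤ 1)
    (i : ℕ) (t : F) :
    MvPolynomial.eval (fun j => if j = i then t else 0) p =
      MvPolynomial.coeff 0 p + MvPolynomial.coeff (Finsupp.single i 1) p * t := by
  classical
  set x : ℕ → F := fun j => if j = i then t else 0 with hx
  rw [MvPolynomial.eval_eq]
  have hterm : ∀ m ∈ p.support,
      MvPolynomial.coeff m p * ∏ j ∈ m.support, x j ^ m j =
      (if m = 0 then MvPolynomial.coeff 0 p else 0) +
      (if m = Finsupp.single i 1 then MvPolynomial.coeff m p * t else 0) := by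
    intro m hm
    rcases support_affine hp m hm with rfl | ⟨j, rfl⟩
    · have h1 : (Finsupp.single i 1 : ℕ →₀ ℕ) ≠ 0 := by
        intro hc
        have := Finsupp.single_eq_zero.mp hc
        omega
      simp [Ne.symm h1]
    · have hj0 : (Finsupp.single j 1 : ℕ →₀ ℕ) ≠ 0 := by
        intro hc
        have := Finsupp.single_eq_zero.mp hc
        omega
      have hsupp : (Finsupp.single j 1 : ℕ →₀ ℕ).support = {j} :=
        Finsupp.support_single_ne_zero j one_ne_zero
      by_cases hji : j = i
      · subst hji
        simp [hj0, hsupp, hx]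
      · have hne : (Finsupp.single j 1 : ℕ →₀ ℕ) ≠ Finsupp.single i 1 := by
          intro hc
          have := Finsupp.single_left_injective (one_ne_zero (α := ℕ)) hc
          exact hji this
        simp [hj0, hne, hsupp, hx, hji]
  rw [Finset.sum_congr rfl hterm, Finset.sum_add_distrib]
  rw [Finset.sum_ite_eq' p.support 0 (fun _ => MvPolynomial.coeff 0 p)]
  rw [Finset.sum_ite_eq' p.support (Finsupp.single i 1)
    (fun m => MvPolynomial.coeff m p * t)]
  by_cases h0 : (0 : ℕ →₀ ℕ) ∈ p.support
  · rw [if_pos h0]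
    by_cases h1 : (Finsupp.single i 1 : ℕ →₀ ℕ) ∈ p.support
    · rw [if_pos h1]
    · rw [if_neg h1, MvPolynomial.notMem_support_iff.mp h1]
      try ring
  · rw [if_neg h0, MvPolynomial.notMem_support_iff.mp h0]
    by_cases h1 : (Finsupp.single i 1 : ℕ →₀ ℕ) ∈ p.support
    · rw [if_pos h1]
      try ring
    · rw [if_neg h1, MvPolynomial.notMem_support_iff.mp h1]
      try ring

/-- No nonconstant affine linear form divides `X 0 * X 1 + 1`. -/
lemma affine_factor_const {p q : MvPolynomial ℕ F} (hp : p.totalDegree ≤ 1)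
    (h : p * q = X 0 * X 1 + 1) : ∃ d : F, p = C d := by
  by_contra hc
  push_neg at hc
  have : ∃ i, MvPolynomial.coeff (Finsupp.single i 1) p ≠ 0 := by
    by_contra hall
    push_neg at hall
    exact hc _ (affine_const_of_coeffs hp hall)
  obtain ⟨i, hi⟩ := this
  set a := MvPolynomial.coeff (Finsupp.single i 1) p with ha
  set t : F := -(MvPolynomial.coeff 0 p) / a with ht
  set x : ℕ → F := fun j => if j = i then t else 0 with hx
  have hevalp : MvPolynomial.eval x p = 0 := by
    rw [eval_affine_sparse hp i t, ht]
    field_simp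
    rw [← ha]
    ring
  have := congrArg (MvPolynomial.eval x) h
  rw [map_mul, hevalp, zero_mul, map_add, map_mul, map_one, MvPolynomial.eval_X,
    MvPolynomial.eval_X] at this
  have hx01 : x 0 * x 1 = 0 := by
    by_cases h0 : (0 : ℕ) = i
    · have : x 1 = 0 := by simp [hx, h0 ▸ (by omega : (1:ℕ) ≠ 0)]
      rw [this, mul_zero]
    · have : x 0 = 0 := by simp [hx, h0]
      rw [this, zero_mul]
  rw [hx01, zero_add] at this
  exact one_ne_zero this.symm

lemma not_prod_affine : ∀ (L : List (MvPolynomial ℕ F)), (∀ ℓ ∈ L, (ℓ : MvPolynomial ℕ F).totalDegree ≤ 1) →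
    ∀ c : F, C c * L.prod ≠ (X 0 * X 1 + 1 : MvPolynomial ℕ F) := by
  intro L
  induction L with
  | nil =>
    intro _ c h
    simp only [List.prod_nil, mul_one] at h
    have h1 := congrArg (MvPolynomial.eval (fun _ => (0 : F))) h
    have h2 := congrArg (MvPolynomial.eval (fun _ => (1 : F))) h
    simp [MvPolynomial.eval_C] at h1 h2
    rw [h1] at h2
    have : (0 : F) + 1 = 1 + 1 := by rw [zero_add]; exact h2
    exact zero_ne_one (add_right_cancel this)
  | cons ℓ L ih =>
    intro hL c h
    have hd : ∃ d : F, ℓ = C d := by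
      apply affine_factor_const (hL ℓ List.mem_cons_self) (q := C c * L.prod)
      rw [← h, List.prod_cons]
      ring
    obtain ⟨d, rfl⟩ := hd
    apply ih (fun m hm => hL m (List.mem_cons_of_mem _ hm)) (c * d)
    rw [← h, List.prod_cons, C_mul]
    ring

lemma not_in_VP_gen : (fun _ : ℕ => (X 0 * X 1 + 1 : MvPolynomial ℕ F)) ∉
    VPkClass F 1 IsGenForm := by
  rintro ⟨-, s, -, hcomp⟩
  obtain ⟨s', -, habp⟩ := hcomp 0
  obtain ⟨c, L, -, hL, heq⟩ := (abp_one_iff _ _ _).mp habp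
  exact not_prod_affine L hL c heq.symm

end Hardness

section Witness

variable {F : Type} [Field F]

lemma sum_bool1 {M : Type*} [AddCommMonoid M] (t : (Fin 1 → Bool) → M) :
    ∑ b : Fin 1 → Bool, t b = t (fun _ => false) + t (fun _ => true) := by
  rw [← (Equiv.funUnique (Fin 1) Bool).symm.sum_comp t, Fintype.sum_bool, add_comm]
  rfl

lemma deg_form (j k : ℕ) :
    (C (-2 : F) * X j + X k + 1 : MvPolynomial ℕ F).totalDegree ≤ 1 := by
  refine le_trans (MvPolynomial.totalDegree_add _ _)
    (max_le (le_trans (MvPolynomial.totalDegree_add _ _) (max_le ?_ ?_)) ?_)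
  · refine le_trans (MvPolynomial.totalDegree_mul _ _) ?_
    rw [MvPolynomial.totalDegree_C, MvPolynomial.totalDegree_X]
  · rw [MvPolynomial.totalDegree_X]
  · rw [MvPolynomial.totalDegree_one]
    omega

lemma vars_form (j k : ℕ) :
    ∀ i ∈ (C (-2 : F) * X j + X k + 1 : MvPolynomial ℕ F).vars, i = j ∨ i = k := by
  classical
  intro i hi
  have h1 := MvPolynomial.vars_add_subset (C (-2 : F) * X j + X k) 1 hi
  rw [MvPolynomial.vars_one, Finset.union_empty] at h1
  have h2 := MvPolynomial.vars_add_subset (C (-2 : F) * X j) (X k) h1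
  rcases Finset.mem_union.mp h2 with h3 | h3
  · have h4 := MvPolynomial.vars_mul _ _ h3
    rw [MvPolynomial.vars_C, MvPolynomial.vars_X, Finset.empty_union,
      Finset.mem_singleton] at h4
    exact Or.inl h4
  · rw [MvPolynomial.vars_X, Finset.mem_singleton] at h3
    exact Or.inr h3

lemma vars_target : ∀ i ∈ (X 0 * X 1 + 1 : MvPolynomial ℕ F).vars, i < 2 := by
  classical
  intro i hi
  have h1 := MvPolynomial.vars_add_subset (X 0 * X 1) 1 hi
  rw [MvPolynomial.vars_one, Finset.union_empty] at h1
  have h2 := MvPolynomial.vars_mul _ _ h1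
  rw [MvPolynomial.vars_X, MvPolynomial.vars_X] at h2
  rcases Finset.mem_union.mp h2 with h3 | h3 <;>
    · rw [Finset.mem_singleton] at h3
      omega

/-- The witness polynomial `g` used in the hypercube sum. -/
def witG (F : Type) [Field F] : MvPolynomial ℕ F :=
  C (2⁻¹ : F) * ((C (-2 : F) * X 0 + X 1 + 1) * (C (-2 : F) * X 0 + X 2 + 1))

lemma witG_mem : (fun _ : ℕ => witG F) ∈ VPkClass F 1 IsGenForm := by
  refine ⟨⟨fun _ => 3, polyBounded_const 3, fun n i hi => ?_⟩,
    fun _ => 2, polyBounded_const 2, fun n => ⟨2, le_refl 2, ?_⟩⟩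
  · classical
    show i < 3
    have h1 := MvPolynomial.vars_mul (C (2⁻¹ : F))
      ((C (-2 : F) * X 0 + X 1 + 1) * (C (-2 : F) * X 0 + X 2 + 1)) hi
    rw [MvPolynomial.vars_C, Finset.empty_union] at h1
    have h2 := MvPolynomial.vars_mul _ _ h1
    rcases Finset.mem_union.mp h2 with h3 | h3
    · rcases vars_form (F := F) 0 1 i h3 with rfl | rfl <;> omega
    · rcases vars_form (F := F) 0 2 i h3 with rfl | rfl <;> omega
  · rw [abp_one_iff]
    refine ⟨2⁻¹, [C (-2 : F) * X 0 + X 1 + 1, C (-2 : F) * X 0 + X 2 + 1], rfl, ?_, ?_⟩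
    · intro ℓ hℓ
      rcases List.mem_cons.mp hℓ with rfl | hℓ
      · exact deg_form 0 1
      · rcases List.mem_cons.mp hℓ with rfl | hℓ
        · exact deg_form 0 2
        · simp at hℓ
    · rw [List.prod_cons, List.prod_cons, List.prod_nil, mul_one]
      rfl

lemma hcSum_witG (h2 : (2 : F) ≠ 0) :
    hcSum 1 (witG F) = (X 0 * X 1 + 1 : MvPolynomial ℕ F) := by
  rw [hcSum_eq, sum_bool1]
  have eF0 : (hcVal 1 (fun _ => false) : ℕ → MvPolynomial ℕ F) 0 = 0 := by simp [hcVal]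
  have eF1 : (hcVal 1 (fun _ => false) : ℕ → MvPolynomial ℕ F) 1 = X 0 := by simp [hcVal]
  have eF2 : (hcVal 1 (fun _ => false) : ℕ → MvPolynomial ℕ F) 2 = X 1 := by simp [hcVal]
  have eT0 : (hcVal 1 (fun _ => true) : ℕ → MvPolynomial ℕ F) 0 = 1 := by simp [hcVal]
  have eT1 : (hcVal 1 (fun _ => true) : ℕ → MvPolynomial ℕ F) 1 = X 0 := by simp [hcVal]
  have eT2 : (hcVal 1 (fun _ => true) : ℕ → MvPolynomial ℕ F) 2 = X 1 := by simp [hcVal]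
  simp only [witG, map_mul, map_add, map_one, aeval_C, aeval_X,
    MvPolynomial.algebraMap_eq, eF0, eF1, eF2, eT0, eT1, eT2]
  have hC2 : (C (2 : F) : MvPolynomial ℕ F) = 2 := map_ofNat _ 2
  have hCn : (C (-2 : F) : MvPolynomial ℕ F) = -2 := by rw [map_neg, hC2]
  calc C (2⁻¹ : F) * ((C (-2 : F) * 0 + X 0 + 1) * (C (-2 : F) * 0 + X 1 + 1)) +
        C (2⁻¹ : F) * ((C (-2 : F) * 1 + X 0 + 1) * (C (-2 : F) * 1 + X 1 + 1))
      = C (2⁻¹ : F) * (C (2:F) * (X 0 * X 1 + 1)) := by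
        rw [hCn, hC2]; ring
    _ = (C (2⁻¹ : F) * C (2 : F)) * (X 0 * X 1 + 1) := by ring
    _ = X 0 * X 1 + 1 := by rw [← C_mul, inv_mul_cancel₀ h2, C_1, one_mul]

lemma target_mem_N (h2 : (2 : F) ≠ 0) :
    (fun _ : ℕ => (X 0 * X 1 + 1 : MvPolynomial ℕ F)) ∈
      Nclosure (VPkClass F 1 IsGenForm) := by
  refine ⟨⟨fun _ => 2, polyBounded_const 2, fun n => vars_target⟩,
    (fun _ : ℕ => witG F), witG_mem, fun _ => 1, fun n => n,
    polyBounded_const 1, polyBounded_id, fun n => (hcSum_witG h2).symm⟩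

end Witness


/-- `VP_1^weakest = VNP_1^weakest` and `VP_1^weak = VNP_1^weak` over any
field; if moreover `char F ≠ 2`, then `VP_1^gen ⊊ VNP_1^gen`. -/
theorem statement18 (F : Type) [Field F] :
    (VPkClass F 1 IsWeakestForm = Nclosure (VPkClass F 1 IsWeakestForm) ∧
     VPkClass F 1 IsWeakForm = Nclosure (VPkClass F 1 IsWeakForm)) ∧
    (ringChar F ≠ 2 → VPkClass F 1 IsGenForm ⊂ Nclosure (VPkClass F 1 IsGenForm)) := by
  refine ⟨⟨Set.Subset.antisymm (VP_sub_N 1 _) (N_sub_VP goodForm_weakest),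
    Set.Subset.antisymm (VP_sub_N 1 _) (N_sub_VP goodForm_weak)⟩, fun hchar => ?_⟩
  have h2 : (2 : F) ≠ 0 := Ring.two_ne_zero hchar
  rw [Set.ssubset_def]
  exact ⟨VP_sub_N 1 _, fun hsub => not_in_VP_gen (hsub (target_mem_N h2))⟩

end
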